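/- Let R be a commutative ring with unity having no non-trivial idempotent and such that the clean graph Cl(R) is finite. Then: (i) if |U(R)| = 1, then sdim(Cl(R)) = 1; (ii) if |U(R)| ≥ 2, then sdim(Cl(R)) = 2|U(R)| − 2. -/

import Mathlib

variable {V : Type*}

/-- In a graph `G`, `u` is maximally distant from `v` if `d(v,w) ≤ d(u,v)` for every
neighbour `w` of `u`. -/
def IsMaxDistFrom (G : SimpleGraph V) (u v : V) : Prop :=
  ∀ w ∈ G.neighborSet u, G.dist v w ≤ G.dist u v

/-- `u` and `v` are mutually maximally distant in `G`. -/
def IsMMD (G : SimpleGraph V) (u v : V) : Prop :=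
  IsMaxDistFrom G u v ∧ IsMaxDistFrom G v u

/-- The boundary of a graph: the set of vertices that are mutually maximally distant
from some other vertex.  This is the vertex set of the strong resolving graph. -/
def graphBoundary (G : SimpleGraph V) : Set V :=
  {u | ∃ v, u ≠ v ∧ IsMMD G u v}

/-- The strong resolving graph, realised on the full vertex set (vertices outside the
boundary are isolated): two distinct vertices are adjacent iff they are mutually
maximally distant. -/
def srGraph (G : SimpleGraph V) : SimpleGraph V where
  Adj u v := u ≠ v ∧ IsMMD G u v
  symm := ⟨fun u v h => ⟨h.1.symm, h.2.2, h.2.1⟩⟩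
  loopless := ⟨fun u h => h.1 rfl⟩

/-- The independence number of a graph: the largest cardinality of a finite set of
pairwise non-adjacent vertices. -/
noncomputable def indNum (G : SimpleGraph V) : ℕ :=
  sSup {n | ∃ s : Finset V, ((s : Set V).Pairwise fun a b => ¬ G.Adj a b) ∧ s.card = n}

/-- `S` is a strong resolving set of `G`: every pair of distinct vertices `u, v` is
strongly resolved by some `w ∈ S`, i.e. `v` lies on a shortest `u`-`w` path or `u` lies
on a shortest `v`-`w` path. -/
def IsStrongResolvingSet (G : SimpleGraph V) (S : Set V) : Prop :=
  ∀ u v : V, u ≠ v → ∃ w ∈ S,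
    G.dist u w = G.dist u v + G.dist v w ∨ G.dist v w = G.dist v u + G.dist u w

/-- The strong metric dimension of a graph: the smallest cardinality of a (finite)
strong resolving set. -/
noncomputable def sdim (G : SimpleGraph V) : ℕ :=
  sInf {n | ∃ S : Finset V, IsStrongResolvingSet G (S : Set V) ∧ S.card = n}

/-- Vertices of the clean graph: pairs `(e, u)` with `e` an idempotent and `u` a unit. -/
abbrev CleanVtx (R : Type*) [CommRing R] : Type _ := {e : R // IsIdempotentElem e} × Rˣ

/-- The clean graph `Cl(R)` of a commutative ring `R`: distinct vertices `(e,u)`, `(f,v)`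
are adjacent iff `e * f = 0` or `u * v = 1`. -/
def cleanGraph (R : Type*) [CommRing R] : SimpleGraph (CleanVtx R) where
  Adj x y := x ≠ y ∧ ((x.1 : R) * (y.1 : R) = 0 ∨ (x.2 : R) * (y.2 : R) = 1)
  symm := by
    constructor
    rintro x y ⟨hxy, h | h⟩
    · exact ⟨hxy.symm, Or.inl (by rwa [mul_comm])⟩
    · exact ⟨hxy.symm, Or.inr (by rwa [mul_comm])⟩
  loopless := ⟨fun x h => h.1 rfl⟩

/-- The vertex set of `Cl₂(R)`: clean vertices `(e,u)` with `e ≠ 0`. -/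
def clean2Set (R : Type*) [CommRing R] : Set (CleanVtx R) := {x | (x.1 : R) ≠ 0}

/-- `Cl₂(R)`, the subgraph of `Cl(R)` induced on the vertices `(e,u)` with `e ≠ 0`. -/
def clean2Graph (R : Type*) [CommRing R] : SimpleGraph (clean2Set R) :=
  SimpleGraph.induce (clean2Set R) (cleanGraph R)

/-- `U''(R)`: the set of units `u` with `u² ≠ 1`. -/
def uSecond (R : Type*) [CommRing R] : Set Rˣ := {u | (u : R) * (u : R) ≠ 1}

/-- `|Id(R)*|`: the number of non-trivial idempotents of `R`. -/
noncomputable def idStarNum (R : Type*) [CommRing R] : ℕ :=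
  {e : R | IsIdempotentElem e ∧ e ≠ 0 ∧ e ≠ 1}.ncard

/-- `|Id⊥(R)*|`: the maximum cardinality of a set of nonzero pairwise orthogonal
idempotents of `R`. -/
noncomputable def orthIdemNum (R : Type*) [CommRing R] : ℕ :=
  sSup {n | ∃ s : Finset R, (∀ e ∈ s, IsIdempotentElem e ∧ e ≠ 0) ∧
    ((s : Set R).Pairwise fun e f => e * f = 0) ∧ s.card = n}
section CleanHelpers

variable {R : Type*} [CommRing R] [Nontrivial R]

/-- The zero idempotent as a vertex component. -/
def czI : {e : R // IsIdempotentElem e} := ⟨0, IsIdempotentElem.zero⟩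

/-- The one idempotent as a vertex component. -/
def coI : {e : R // IsIdempotentElem e} := ⟨1, IsIdempotentElem.one⟩

lemma czI_ne_coI : (czI : {e : R // IsIdempotentElem e}) ≠ coI := by
  simp [czI, coI, Subtype.ext_iff]

lemma cleanGraph_adj {u v : CleanVtx R} :
    (cleanGraph R).Adj u v ↔ u ≠ v ∧ ((u.1 : R) * v.1 = 0 ∨ (u.2 : R) * v.2 = 1) :=
  Iff.rfl

lemma adj_of_fst_zero {u v : CleanVtx R} (h : u ≠ v) (h0 : (u.1 : R) = 0) :
    (cleanGraph R).Adj u v :=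
  ⟨h, Or.inl (by rw [h0, zero_mul])⟩

lemma adj_of_snd_zero {u v : CleanVtx R} (h : u ≠ v) (h0 : (v.1 : R) = 0) :
    (cleanGraph R).Adj u v :=
  ⟨h, Or.inl (by rw [h0, mul_zero])⟩

lemma fst_eq_czI_or_coI (hid : ∀ e : R, IsIdempotentElem e → e = 0 ∨ e = 1)
    (u : CleanVtx R) : u.1 = czI ∨ u.1 = coI := by
  rcases hid u.1.1 u.1.2 with h | h
  · exact Or.inl (Subtype.ext h)
  · exact Or.inr (Subtype.ext h)

lemma exists_walk_le_two (hid : ∀ e : R, IsIdempotentElem e → e = 0 ∨ e = 1)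
    (u v : CleanVtx R) : ∃ p : (cleanGraph R).Walk u v, p.length ≤ 2 := by
  by_cases huv : u = v
  · subst huv; exact ⟨SimpleGraph.Walk.nil, by simp⟩
  by_cases hadj : (cleanGraph R).Adj u v
  · exact ⟨SimpleGraph.Walk.cons hadj SimpleGraph.Walk.nil, by simp⟩
  · -- both first components are nonzero
    have hu1 : (u.1 : R) ≠ 0 := fun h0 => hadj (adj_of_fst_zero huv h0)
    have hv1 : (v.1 : R) ≠ 0 := fun h0 => hadj (adj_of_snd_zero huv h0)
    set m : CleanVtx R := (czI, 1) with hm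
    have hmu : u ≠ m := by
      intro h; apply hu1; rw [h]; rfl
    have hmv : m ≠ v := by
      intro h; apply hv1; rw [← h]; rfl
    have h1 : (cleanGraph R).Adj u m := adj_of_snd_zero hmu rfl
    have h2 : (cleanGraph R).Adj m v := adj_of_fst_zero hmv rfl
    exact ⟨SimpleGraph.Walk.cons h1 (SimpleGraph.Walk.cons h2 SimpleGraph.Walk.nil), by simp⟩

lemma clean_reachable (hid : ∀ e : R, IsIdempotentElem e → e = 0 ∨ e = 1)
    (u v : CleanVtx R) : (cleanGraph R).Reachable u v := by
  obtain ⟨p, -⟩ := exists_walk_le_two hid u v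
  exact ⟨p⟩

lemma clean_dist_le_two (hid : ∀ e : R, IsIdempotentElem e → e = 0 ∨ e = 1)
    (u v : CleanVtx R) : (cleanGraph R).dist u v ≤ 2 := by
  obtain ⟨p, hp⟩ := exists_walk_le_two hid u v
  exact (SimpleGraph.dist_le p).trans hp

lemma clean_dist_pos (hid : ∀ e : R, IsIdempotentElem e → e = 0 ∨ e = 1)
    {u v : CleanVtx R} (h : u ≠ v) : 1 ≤ (cleanGraph R).dist u v :=
  (clean_reachable hid u v).pos_dist_of_ne h

lemma clean_dist_eq_two (hid : ∀ e : R, IsIdempotentElem e → e = 0 ∨ e = 1)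
    {u v : CleanVtx R} (hne : u ≠ v) (hna : ¬ (cleanGraph R).Adj u v) :
    (cleanGraph R).dist u v = 2 := by
  have h2 := clean_dist_le_two hid u v
  have h0 := clean_dist_pos hid hne
  have h1 : (cleanGraph R).dist u v ≠ 1 := fun h =>
    hna (SimpleGraph.dist_eq_one_iff_adj.mp h)
  omega

/-- If `u.1 = v.1` then only the endpoints strongly resolve the pair `u, v`
(one-sided version). -/
lemma clean_resolver_aux (hid : ∀ e : R, IsIdempotentElem e → e = 0 ∨ e = 1)
    {u v w : CleanVtx R} (h1 : u.1 = v.1) (huv : u ≠ v)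
    (h : (cleanGraph R).dist u w =
      (cleanGraph R).dist u v + (cleanGraph R).dist v w) :
    w = u ∨ w = v := by
  by_contra hc
  push_neg at hc
  obtain ⟨hwu, hwv⟩ := hc
  have duv_pos := clean_dist_pos hid huv
  have dvw_pos := clean_dist_pos hid (Ne.symm hwv)
  have duw_le := clean_dist_le_two hid u w
  have duv1 : (cleanGraph R).dist u v = 1 := by omega
  have dvw1 : (cleanGraph R).dist v w = 1 := by omega
  have duw2 : (cleanGraph R).dist u w = 2 := by omega
  have hadj_uv : (cleanGraph R).Adj u v := SimpleGraph.dist_eq_one_iff_adj.mp duv1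
  have hadj_vw : (cleanGraph R).Adj v w := SimpleGraph.dist_eq_one_iff_adj.mp dvw1
  have hnadj_uw : ¬ (cleanGraph R).Adj u w := by
    intro hadj
    rw [SimpleGraph.dist_eq_one_iff_adj.mpr hadj] at duw2
    omega
  have hune : u ≠ w := Ne.symm hwu
  have hu1 : (u.1 : R) = 1 := by
    rcases hid u.1.1 u.1.2 with h0 | h0
    · exact absurd (adj_of_fst_zero hune h0) hnadj_uw
    · exact h0
  have hv1 : (v.1 : R) = 1 := by rw [← h1]; exact hu1
  have hw1 : (w.1 : R) = 1 := by
    rcases hid w.1.1 w.1.2 with h0 | h0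
    · exact absurd (adj_of_snd_zero hune h0) hnadj_uw
    · exact h0
  have hvw2 : (v.2 : R) * (w.2 : R) = 1 := by
    rcases hadj_vw.2 with h0 | h0
    · rw [hv1, hw1, mul_one] at h0; exact absurd h0 one_ne_zero
    · exact h0
  have huv2 : (u.2 : R) * (v.2 : R) = 1 := by
    rcases hadj_uv.2 with h0 | h0
    · rw [hu1, hv1, mul_one] at h0; exact absurd h0 one_ne_zero
    · exact h0
  have huv2' : u.2 * v.2 = 1 := Units.ext (by simpa using huv2)
  have hvw2' : v.2 * w.2 = 1 := Units.ext (by simpa using hvw2)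
  have hsnd : u.2 = w.2 := by
    calc u.2 = u.2 * (v.2 * w.2) := by rw [hvw2', mul_one]
    _ = (u.2 * v.2) * w.2 := by rw [mul_assoc]
    _ = w.2 := by rw [huv2', one_mul]
  exact hwu (Prod.ext (Subtype.ext (hw1.trans hu1.symm)) hsnd.symm)

lemma clean_resolver (hid : ∀ e : R, IsIdempotentElem e → e = 0 ∨ e = 1)
    {u v w : CleanVtx R} (h1 : u.1 = v.1) (huv : u ≠ v)
    (h : (cleanGraph R).dist u w =
        (cleanGraph R).dist u v + (cleanGraph R).dist v w ∨
      (cleanGraph R).dist v w =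
        (cleanGraph R).dist v u + (cleanGraph R).dist u w) :
    w = u ∨ w = v := by
  rcases h with h | h
  · exact clean_resolver_aux hid h1 huv h
  · exact (clean_resolver_aux hid h1.symm huv.symm h).symm

end CleanHelpers
theorem statement_14 (R : Type*) [CommRing R] [Nontrivial R]
    (hid : ∀ e : R, IsIdempotentElem e → e = 0 ∨ e = 1)
    (hfin : Finite (CleanVtx R)) :
    (Nat.card Rˣ = 1 → sdim (cleanGraph R) = 1) ∧
    (2 ≤ Nat.card Rˣ → sdim (cleanGraph R) = 2 * Nat.card Rˣ - 2) := by
  classical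
  have hUfin : Finite Rˣ := Finite.of_injective
    (fun a => ((czI, a) : CleanVtx R)) (fun a b h => by
      simpa using congrArg Prod.snd h)
  have : Fintype Rˣ := Fintype.ofFinite Rˣ
  have hNcard : Nat.card Rˣ = Fintype.card Rˣ := Nat.card_eq_fintype_card
  -- the vertex (czI, 1) ≠ (coI, 1)
  have hzo : ((czI, (1 : Rˣ)) : CleanVtx R) ≠ (coI, 1) := by
    intro h
    exact czI_ne_coI (congrArg Prod.fst h)
  -- a vertex is a strong resolver of every pair it belongs to
  have endpointL : ∀ u v : CleanVtx R,
      (cleanGraph R).dist u v = (cleanGraph R).dist u v + (cleanGraph R).dist v v := by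
    intro u v; rw [SimpleGraph.dist_self]; ring
  constructor
  · -- Part 1 : exactly one unit
    intro hcard
    have hsub : Subsingleton Rˣ := by
      have := Nat.card_eq_one_iff_unique.mp hcard
      exact this.1
    have hvtx : ∀ x : CleanVtx R, x = (czI, 1) ∨ x = (coI, 1) := by
      intro x
      have hx2 : x.2 = 1 := Subsingleton.elim _ _
      rcases fst_eq_czI_or_coI hid x with h | h
      · exact Or.inl (Prod.ext h hx2)
      · exact Or.inr (Prod.ext h hx2)
    have h1 : (1 : ℕ) ∈ {n | ∃ S : Finset (CleanVtx R),
        IsStrongResolvingSet (cleanGraph R) (S : Set (CleanVtx R)) ∧ S.card = n} := by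
      refine ⟨{(czI, 1)}, ?_, by simp⟩
      intro u v huv
      rcases hvtx u with hu | hu
      · exact ⟨(czI, 1), by simp, Or.inr (by rw [← hu]; exact endpointL v u)⟩
      · rcases hvtx v with hv | hv
        · exact ⟨(czI, 1), by simp, Or.inl (by rw [← hv]; exact endpointL u v)⟩
        · exact absurd (hu.trans hv.symm) huv
    have h0 : (0 : ℕ) ∉ {n | ∃ S : Finset (CleanVtx R),
        IsStrongResolvingSet (cleanGraph R) (S : Set (CleanVtx R)) ∧ S.card = n} := by
      rintro ⟨S, hS, hc⟩
      rw [Finset.card_eq_zero] at hc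
      subst hc
      obtain ⟨w, hw, -⟩ := hS (czI, 1) (coI, 1) hzo
      simp at hw
    have hmem := Nat.sInf_mem (⟨1, h1⟩ : Set.Nonempty _)
    have hle := Nat.sInf_le h1
    have hne : sInf {n | ∃ S : Finset (CleanVtx R),
        IsStrongResolvingSet (cleanGraph R) (S : Set (CleanVtx R)) ∧ S.card = n} ≠ 0 :=
      fun h => h0 (h ▸ hmem)
    rw [sdim]
    omega
  · -- Part 2 : at least two units
    intro hN
    set N := Nat.card Rˣ with hNdef
    -- injectivity of the fiber maps
    have hinjz : Function.Injective (fun a : Rˣ => ((czI, a) : CleanVtx R)) :=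
      fun a b h => by simpa using congrArg Prod.snd h
    have hinjo : Function.Injective (fun a : Rˣ => ((coI, a) : CleanVtx R)) :=
      fun a b h => by simpa using congrArg Prod.snd h
    -- Upper bound: explicit strong resolving set of size 2N - 2
    have hupper : (2 * N - 2) ∈ {n | ∃ S : Finset (CleanVtx R),
        IsStrongResolvingSet (cleanGraph R) (S : Set (CleanVtx R)) ∧ S.card = n} := by
      refine ⟨((Finset.univ.erase (1 : Rˣ)).image fun a => ((czI, a) : CleanVtx R)) ∪
        ((Finset.univ.erase (1 : Rˣ)).image fun a => ((coI, a) : CleanVtx R)), ?_, ?_⟩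
      · -- it is a strong resolving set
        have hmemS : ∀ x : CleanVtx R, x.2 ≠ 1 →
            x ∈ ((Finset.univ.erase (1 : Rˣ)).image fun a => ((czI, a) : CleanVtx R)) ∪
              ((Finset.univ.erase (1 : Rˣ)).image fun a => ((coI, a) : CleanVtx R)) := by
          intro x hx2
          rcases fst_eq_czI_or_coI hid x with h | h
          · refine Finset.mem_union_left _ (Finset.mem_image.mpr ⟨x.2, by simp [hx2], ?_⟩)
            exact Prod.ext h.symm rfl
          · refine Finset.mem_union_right _ (Finset.mem_image.mpr ⟨x.2, by simp [hx2], ?_⟩)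
            exact Prod.ext h.symm rfl
        intro u v huv
        by_cases hu2 : u.2 = 1
        · by_cases hv2 : v.2 = 1
          · -- both second components are 1; first components differ
            have hfst : u.1 ≠ v.1 := by
              intro h; exact huv (Prod.ext h (hu2.trans hv2.symm))
            have hnontriv : Nontrivial Rˣ := Fintype.one_lt_card_iff_nontrivial.mp (by omega)
            obtain ⟨c, hc⟩ := exists_ne (1 : Rˣ)
            set w : CleanVtx R := (coI, c) with hw
            have hwS := hmemS w hc
            -- distances
            have hadj_zo : (cleanGraph R).Adj (czI, (1 : Rˣ)) (coI, 1) :=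
              adj_of_fst_zero hzo rfl
            have hadj_zw : (cleanGraph R).Adj ((czI, (1 : Rˣ)) : CleanVtx R) w :=
              adj_of_fst_zero (by
                intro h
                exact czI_ne_coI (congrArg Prod.fst h)) rfl
            have hd_ow : (cleanGraph R).dist ((coI, (1 : Rˣ)) : CleanVtx R) w = 2 := by
              refine clean_dist_eq_two hid ?_ ?_
              · intro h
                exact hc ((congrArg Prod.snd h).symm)
              · rintro ⟨-, h | h⟩
                · rw [show ((coI : {e : R // IsIdempotentElem e}) : R) = 1 from rfl,
                    one_mul] at h
                  exact one_ne_zero h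
                · exact hc (Units.ext (by simpa using h))
            rcases fst_eq_czI_or_coI hid u with hu1 | hu1
            · -- u = (czI,1), v = (coI,1)
              have hueq : u = ((czI, 1) : CleanVtx R) := Prod.ext hu1 hu2
              have hveq : v = ((coI, 1) : CleanVtx R) := by
                rcases fst_eq_czI_or_coI hid v with hv1 | hv1
                · exact absurd (hu1.trans hv1.symm) hfst
                · exact Prod.ext hv1 hv2
              refine ⟨w, hwS, Or.inr ?_⟩
              rw [hueq, hveq, hd_ow,
                SimpleGraph.dist_eq_one_iff_adj.mpr hadj_zo.symm,
                SimpleGraph.dist_eq_one_iff_adj.mpr hadj_zw]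
            · -- u = (coI,1), v = (czI,1)
              have hueq : u = ((coI, 1) : CleanVtx R) := Prod.ext hu1 hu2
              have hveq : v = ((czI, 1) : CleanVtx R) := by
                rcases fst_eq_czI_or_coI hid v with hv1 | hv1
                · exact Prod.ext hv1 hv2
                · exact absurd (hu1.trans hv1.symm) hfst
              refine ⟨w, hwS, Or.inl ?_⟩
              rw [hueq, hveq, hd_ow,
                SimpleGraph.dist_eq_one_iff_adj.mpr hadj_zo.symm,
                SimpleGraph.dist_eq_one_iff_adj.mpr hadj_zw]
          · exact ⟨v, hmemS v hv2, Or.inl (endpointL u v)⟩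
        · exact ⟨u, hmemS u hu2, Or.inr (endpointL v u)⟩
      · -- cardinality
        rw [Finset.card_union_of_disjoint, Finset.card_image_of_injective _ hinjz,
          Finset.card_image_of_injective _ hinjo, Finset.card_erase_of_mem (Finset.mem_univ _),
          Finset.card_univ, ← hNcard]
        · omega
        · rw [Finset.disjoint_left]
          rintro x hx1 hx2
          obtain ⟨a, -, ha⟩ := Finset.mem_image.mp hx1
          obtain ⟨b, -, hb⟩ := Finset.mem_image.mp hx2
          exact czI_ne_coI ((congrArg Prod.fst ha).trans (congrArg Prod.fst hb).symm)
    -- Lower bound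
    have hlower : ∀ n ∈ {n | ∃ S : Finset (CleanVtx R),
        IsStrongResolvingSet (cleanGraph R) (S : Set (CleanVtx R)) ∧ S.card = n},
        2 * N - 2 ≤ n := by
      rintro n ⟨S, hS, rfl⟩
      have key : ∀ (z : {e : R // IsIdempotentElem e}) (a b : Rˣ), a ≠ b →
          ((z, a) : CleanVtx R) ∈ S ∨ ((z, b) : CleanVtx R) ∈ S := by
        intro z a b hab
        have hne : ((z, a) : CleanVtx R) ≠ (z, b) := by
          intro h; exact hab (congrArg Prod.snd h)
        obtain ⟨w, hw, hres⟩ := hS (z, a) (z, b) hne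
        rcases clean_resolver hid (u := (z, a)) (v := (z, b)) rfl hne hres with h | h
        · exact Or.inl (h ▸ hw)
        · exact Or.inr (h ▸ hw)
      have hT : ∀ z : {e : R // IsIdempotentElem e},
          N - 1 ≤ (Finset.univ.filter fun a : Rˣ => ((z, a) : CleanVtx R) ∈ S).card := by
        intro z
        set T := Finset.univ.filter fun a : Rˣ => ((z, a) : CleanVtx R) ∈ S with hTdef
        have hcompl : Tᶜ.card ≤ 1 := by
          rw [Finset.card_le_one]
          intro a ha b hb
          by_contra hab
          rw [Finset.mem_compl, hTdef, Finset.mem_filter] at ha hb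
          rcases key z a b hab with h | h
          · exact ha (by simp [h])
          · exact hb (by simp [h])
        have := Finset.card_add_card_compl T
        rw [← hNcard] at this
        omega
      have hsubset : ((Finset.univ.filter fun a : Rˣ => ((czI, a) : CleanVtx R) ∈ S).image
          fun a => ((czI, a) : CleanVtx R)) ∪
          ((Finset.univ.filter fun a : Rˣ => ((coI, a) : CleanVtx R) ∈ S).image
          fun a => ((coI, a) : CleanVtx R)) ⊆ S := by
        intro x hx
        rcases Finset.mem_union.mp hx with hx | hx <;>
          obtain ⟨a, ha, rfl⟩ := Finset.mem_image.mp hx <;>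
          exact (Finset.mem_filter.mp ha).2
      have hcard := Finset.card_le_card hsubset
      rw [Finset.card_union_of_disjoint, Finset.card_image_of_injective _ hinjz,
        Finset.card_image_of_injective _ hinjo] at hcard
      · have h1 := hT czI
        have h2 := hT coI
        omega
      · rw [Finset.disjoint_left]
        rintro x hx1 hx2
        obtain ⟨a, -, ha⟩ := Finset.mem_image.mp hx1
        obtain ⟨b, -, hb⟩ := Finset.mem_image.mp hx2
        exact czI_ne_coI ((congrArg Prod.fst ha).trans (congrArg Prod.fst hb).symm)
    rw [sdim]
    exact le_antisymm (Nat.sInf_le hupper) (le_csInf ⟨_, hupper⟩ hlower)
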